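/- Let f ∈ ℂ[x] with deg f ≥ 1 and suppose p² − q^m = f for an integer m ≥ 3 and polynomials p, q ∈ ℂ[x] with deg p ≥ deg q ≥ 1. Then deg p ≤ 4 + 12·deg f + 8·(deg f)². -/

import Mathlib

open Polynomial

open UniqueFactorizationMonoid UniqueFactorizationDomain in
/-- Radical is monotone with respect to divisibility (for nonzero elements). -/
lemma radical_dvd_radical_aux {a b : ℂ[X]} (ha : a ≠ 0) (hb : b ≠ 0) (h : a ∣ b) :
    radical a ∣ radical b := by
  classical
  apply Finset.prod_dvd_prod_of_subset
  intro x hx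
  simp only [primeFactors, Multiset.mem_toFinset] at hx ⊢
  exact Multiset.mem_of_le
    ((dvd_iff_normalizedFactors_le_normalizedFactors ha hb).mp h) hx

open UniqueFactorizationMonoid UniqueFactorizationDomain in
theorem pillai_case_n_two_m_ge_three_degp (f p q : ℂ[X]) (m : ℕ)
    (hf : 1 ≤ f.natDegree) (hm : 3 ≤ m)
    (hq : 1 ≤ q.natDegree) (hpq : q.natDegree ≤ p.natDegree)
    (heq : p ^ 2 - q ^ m = f) :
    p.natDegree ≤ 4 + 12 * f.natDegree + 8 * f.natDegree ^ 2 := by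
  classical
  have hp1 : 1 ≤ p.natDegree := le_trans hq hpq
  have hp0 : p ≠ 0 := by rintro rfl; simp at hp1
  have hq0 : q ≠ 0 := by rintro rfl; simp at hq
  have hf0 : f ≠ 0 := by rintro rfl; simp at hf
  have hp20 : p ^ 2 ≠ 0 := pow_ne_zero _ hp0
  have hqm0 : q ^ m ≠ 0 := pow_ne_zero _ hq0
  have hfsq : f.natDegree ≤ f.natDegree ^ 2 := by nlinarith
  by_cases hcase : 2 * p.natDegree = m * q.natDegree
  · -- hard case: equal degrees, use Mason–Stothers
    set d := GCDMonoid.gcd (p ^ 2) (q ^ m) with hd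
    have hd0 : d ≠ 0 := gcd_ne_zero_of_left hp20
    set A := p ^ 2 / d with hAdef
    set B := q ^ m / d with hBdef
    have hA : d * A = p ^ 2 :=
      EuclideanDomain.mul_div_cancel' hd0 (gcd_dvd_left _ _)
    have hB : d * B = q ^ m :=
      EuclideanDomain.mul_div_cancel' hd0 (gcd_dvd_right _ _)
    have hA0 : A ≠ 0 := left_div_gcd_ne_zero hp20
    have hB0 : B ≠ 0 := right_div_gcd_ne_zero hqm0
    have hco : IsCoprime A B := isCoprime_div_gcd_div_gcd hqm0
    have hdf : d ∣ f := by
      rw [← heq]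
      exact dvd_sub (gcd_dvd_left _ _) (gcd_dvd_right _ _)
    obtain ⟨C, hC⟩ := hdf
    have hdd : d ∣ f := ⟨C, hC⟩
    have hC0 : C ≠ 0 := by rintro rfl; rw [mul_zero] at hC; exact hf0 hC
    have hsum : A - B = C := by
      apply mul_left_cancel₀ hd0
      rw [mul_sub, hA, hB, heq, hC]
    -- coprimality facts
    have hBC : IsCoprime B C := by
      rw [← hsum]
      have := hco.symm.add_mul_left_right (-1)
      simpa [mul_neg_one, sub_eq_add_neg] using this
    have hCA : IsCoprime C A := by
      rw [← hsum]
      have := (hco.add_mul_left_right (-1)).neg_right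
      have h2 : -(B + A * -1) = A - B := by ring
      rw [h2] at this
      exact this.symm
    -- apply Mason–Stothers
    have habc := Polynomial.abc (a := A) (b := -B) (c := -C) hA0
      (neg_ne_zero.mpr hB0) (neg_ne_zero.mpr hC0)
      hco.neg_right
      (by rw [← hsum]; ring)
    -- degree bookkeeping
    have hddeg : d.natDegree + A.natDegree = 2 * p.natDegree := by
      rw [← natDegree_mul hd0 hA0, hA, natDegree_pow]
    have hdD : d.natDegree ≤ f.natDegree := natDegree_le_of_dvd hdd hf0
    rcases habc with ⟨h1, -, -⟩ | ⟨hA', -, -⟩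
    · -- nondegenerate case
      have hprod : A * -B * -C = A * (B * C) := by ring
      rw [hprod] at h1
      have hrad : radical (A * (B * C)) = radical A * (radical B * radical C) := by
        rw [radical_mul (hco.mul_right hCA.symm).isRelPrime, radical_mul hBC.isRelPrime]
      rw [hrad] at h1
      have hradA : (radical A).natDegree ≤ p.natDegree := by
        have h2 : radical A ∣ p := by
          have : A ∣ p ^ 2 := ⟨d, by rw [← hA]; ring⟩
          have := radical_dvd_radical_aux hA0 hp20 this
          rw [radical_pow p (by norm_num)] at this
          exact this.trans (radical_dvd_self (a := p))
        exact natDegree_le_of_dvd h2 hp0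
      have hradB : (radical B).natDegree ≤ q.natDegree := by
        have h2 : radical B ∣ q := by
          have : B ∣ q ^ m := ⟨d, by rw [← hB]; ring⟩
          have := radical_dvd_radical_aux hB0 hqm0 this
          rw [radical_pow q (by omega)] at this
          exact this.trans (radical_dvd_self (a := q))
        exact natDegree_le_of_dvd h2 hq0
      have hradC : (radical C).natDegree ≤ f.natDegree := by
        have h2 : radical C ∣ f := (radical_dvd_self (a := C)).trans ⟨d, by rw [hC]; ring⟩
        exact natDegree_le_of_dvd h2 hf0
      have hne : radical A ≠ 0 := radical_ne_zero (a := A)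
      have hne2 : radical B ≠ 0 := radical_ne_zero (a := B)
      have hne3 : radical C ≠ 0 := radical_ne_zero (a := C)
      have hmul : (radical A * (radical B * radical C)).natDegree =
          (radical A).natDegree + ((radical B).natDegree + (radical C).natDegree) := by
        rw [natDegree_mul hne (mul_ne_zero hne2 hne3), natDegree_mul hne2 hne3]
      rw [hmul] at h1
      -- h1 : A.natDegree + 1 ≤ radA + (radB + radC)
      have key : A.natDegree + 1 ≤ p.natDegree + q.natDegree + f.natDegree := by omega
      have h3 : 3 * q.natDegree ≤ 2 * p.natDegree := by
        rw [hcase]; exact Nat.mul_le_mul_right _ hm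
      -- 2 dp = d + A ≤ D + A, A + 1 ≤ dp + dq + D
      have hdp : p.natDegree ≤ 6 * f.natDegree := by omega
      nlinarith
    · -- degenerate case: A is constant
      have hAc : A.natDegree = 0 := natDegree_eq_zero_of_derivative_eq_zero hA'
      have : 2 * p.natDegree ≤ f.natDegree := by omega
      nlinarith
  · -- easy case: degrees differ, so f has large degree
    have hdeg2 : (p ^ 2).natDegree = 2 * p.natDegree := natDegree_pow p 2
    have hdegm : (q ^ m).natDegree = m * q.natDegree := natDegree_pow q m
    rcases lt_trichotomy ((q ^ m).natDegree) ((p ^ 2).natDegree) with h | h | h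
    · have : f.natDegree = (p ^ 2).natDegree := by
        rw [← heq]; exact natDegree_sub_eq_left_of_natDegree_lt h
      rw [hdeg2] at this
      nlinarith
    · rw [hdeg2, hdegm] at h; exact absurd h.symm hcase
    · have : f.natDegree = (q ^ m).natDegree := by
        rw [← heq]; exact natDegree_sub_eq_right_of_natDegree_lt h
      rw [hdegm] at this
      have h3 : 3 * q.natDegree ≤ m * q.natDegree := Nat.mul_le_mul_right _ hm
      have h2 : 2 * p.natDegree < m * q.natDegree := by
        rw [hdeg2, hdegm] at h; exact h
      nlinarith
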